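/- Let f : (a,b) → ℝ be continuous. If for every t ∈ (a,b) there exists A ∈ ℝ such that f(t+τ) ≤ f(t) + Aτ + o(τ²) as τ → 0 (i.e., f'' ≤ 0 in the support sense), then f is concave on (a,b). -/

import Mathlib

open Filter Set

/-- `f''(t) ≤ 0` in the support sense: there is `A ∈ ℝ` with
`f(t+τ) ≤ f(t) + Aτ + o(τ²)` as `τ → 0`. -/
def SuppSecondLEZero (f : ℝ → ℝ) (t : ℝ) : Prop :=
  ∃ A : ℝ, ∀ ε > (0 : ℝ), ∀ᶠ τ in nhds (0 : ℝ),
    f (t + τ) ≤ f t + A * τ + ε * τ ^ 2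

theorem concaveOn_of_suppSecondLE (a b : ℝ) (f : ℝ → ℝ)
    (hf : ContinuousOn f (Set.Ioo a b))
    (hsupp : ∀ t ∈ Set.Ioo a b, SuppSecondLEZero f t) :
    ConcaveOn ℝ (Set.Ioo a b) f := by
  have key : ∀ ε > (0:ℝ), ConcaveOn ℝ (Set.Ioo a b) (fun t => f t - ε * t ^ 2) := by
    intro ε hε
    apply LinearOrder.concaveOn_of_lt (convex_Ioo a b)
    intro x hx y hy hxy lam mu hlam hmu hsum
    set g : ℝ → ℝ := fun t => f t - ε * t ^ 2 with hg
    have hxy' : (0:ℝ) < y - x := by linarith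
    set s : ℝ := (g y - g x) / (y - x) with hs
    have hsub : Set.Icc x y ⊆ Set.Ioo a b := fun t ht =>
      ⟨lt_of_lt_of_le hx.1 ht.1, lt_of_le_of_lt ht.2 hy.2⟩
    set h : ℝ → ℝ := fun t => g t - (g x + s * (t - x)) with hh
    have hgcont : ContinuousOn g (Set.Icc x y) :=
      ((hf.mono hsub).sub ((continuous_const.mul (continuous_pow 2)).continuousOn))
    have hcont : ContinuousOn h (Set.Icc x y) :=
      hgcont.sub ((continuous_const.add (continuous_const.mul
        (continuous_id.sub continuous_const))).continuousOn)
    have hhx : h x = 0 := by simp [hh]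
    have hhy : h y = 0 := by
      have : s * (y - x) = g y - g x := by
        rw [hs]; field_simp
      simp [hh, this]
    have claim : ∀ t ∈ Set.Icc x y, g x + s * (t - x) ≤ g t := by
      by_contra hcl
      push_neg at hcl
      obtain ⟨t₀, ht₀, ht₀'⟩ := hcl
      obtain ⟨c, hc, hcmin⟩ := isCompact_Icc.exists_isMinOn ⟨t₀, ht₀⟩ hcont
      have hhc : h c < 0 := lt_of_le_of_lt (hcmin ht₀) (by simp [hh]; linarith)
      have hcx : c ≠ x := fun hcx => by rw [hcx, hhx] at hhc; linarith
      have hcy : c ≠ y := fun hcy => by rw [hcy, hhy] at hhc; linarith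
      have hcIoo : c ∈ Set.Ioo x y :=
        ⟨lt_of_le_of_ne hc.1 (Ne.symm hcx), lt_of_le_of_ne hc.2 hcy⟩
      obtain ⟨A, hA⟩ := hsupp c (hsub (Set.Ioo_subset_Icc_self hcIoo))
      have h1 := hA (ε / 2) (by linarith)
      have h2 : ∀ᶠ τ in nhds (0:ℝ), c + τ ∈ Set.Ioo x y := by
        have htend : Tendsto (fun τ : ℝ => c + τ) (nhds 0) (nhds c) := by
          exact (continuous_add_left c).tendsto' (0:ℝ) c (by simp)
        exact htend.eventually (isOpen_Ioo.mem_nhds hcIoo)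
      have hnegt : Tendsto (fun τ : ℝ => -τ) (nhds 0) (nhds 0) := by
        simpa using continuous_neg.tendsto (0:ℝ)
      have big := (h1.and h2).and (hnegt.eventually (h1.and h2))
      rw [Metric.eventually_nhds_iff] at big
      obtain ⟨δ, hδ, hball⟩ := big
      have hτd : dist (δ/2) (0:ℝ) < δ := by
        rw [Real.dist_eq]
        rw [abs_of_pos (by linarith)]
        linarith
      obtain ⟨⟨hP1, hM1⟩, hP2, hM2⟩ := hball hτd
      set τ := δ/2 with hτ
      have hτ0 : (0:ℝ) < τ := by positivity
      have e1 : h c ≤ h (c + τ) := hcmin (Set.Ioo_subset_Icc_self hM1)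
      have e2 : h c ≤ h (c + -τ) := hcmin (Set.Ioo_subset_Icc_self hM2)
      simp only [hh, hg] at e1 e2
      nlinarith [hP1, hP2, mul_pos hε (mul_pos hτ0 hτ0)]
    have hlam' : lam = 1 - mu := by linarith
    have hzx : (lam • x + mu • y) - x = mu * (y - x) := by
      simp only [smul_eq_mul]; rw [hlam']; ring
    have hz : lam • x + mu • y ∈ Set.Icc x y := by
      simp only [smul_eq_mul]
      rw [hlam']
      constructor
      · nlinarith [mul_nonneg hmu.le hxy'.le]
      · nlinarith [mul_nonneg (by linarith : (0:ℝ) ≤ 1 - mu) hxy'.le]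
    have hcl := claim _ hz
    have hsmul : s * (mu * (y - x)) = mu * (g y - g x) := by
      rw [hs]; field_simp
    have hrw : lam • g x + mu • g y = g x + s * ((lam • x + mu • y) - x) := by
      rw [hzx, hsmul]
      simp only [smul_eq_mul]
      rw [hlam']; ring
    calc lam • g x + mu • g y = g x + s * ((lam • x + mu • y) - x) := hrw
      _ ≤ g (lam • x + mu • y) := hcl
  refine ⟨convex_Ioo a b, fun x hx y hy lam mu hlam hmu hsum => ?_⟩
  simp only [smul_eq_mul]
  refine le_of_forall_pos_le_add fun δ hδ => ?_
  have hC : (0:ℝ) ≤ lam * x ^ 2 + mu * y ^ 2 - (lam * x + mu * y) ^ 2 := by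
    nlinarith [sq_nonneg (x - y), mul_nonneg hlam hmu]
  obtain ⟨e, he0, heC⟩ :
      ∃ e : ℝ, 0 < e ∧ e * (lam * x ^ 2 + mu * y ^ 2 - (lam * x + mu * y) ^ 2) ≤ δ := by
    refine ⟨δ / (lam * x ^ 2 + mu * y ^ 2 - (lam * x + mu * y) ^ 2 + 1),
      div_pos hδ (by linarith), ?_⟩
    rw [div_mul_eq_mul_div, div_le_iff₀ (by linarith)]
    nlinarith
  have h1 := (key e he0).2 hx hy hlam hmu hsum
  simp only [smul_eq_mul] at h1
  nlinarith [h1, heC]
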